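/- Let A be a commutative ring, n ≥ 3, and B = A[X_1, …, X_n]/I where I is the ideal generated by the polynomials X_i² − X_j² (for i < j) and X_i X_j (for i < j). Then the Kähler different vanishes: F₀(Ω_{B/A}) = 0. Consequently, if A is a field whose characteristic does not divide n + 2, the inclusion D_K(B/A) ⊆ D_N(B/A) is strict, since the nonzero element (n + 2)x_1² lies in D_N(B/A) but not in D_K(B/A) = 0. -/

import Mathlib

open TensorProduct MvPolynomial

/-- The 0-th Fitting ideal of a module `M` over `R`: for a finitely presented module it is
the ideal generated by the `n × n` minors of a relation matrix of any presentation of `M`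
with `n` generators; equivalently (by Fitting's lemma, which guarantees independence of the
presentation) the ideal generated by the determinants of all `n × n` matrices whose rows are
relations among the `n` generators.  We take the supremum over all finite presentations. -/
noncomputable def fittingIdeal0 (R M : Type*) [CommRing R] [AddCommGroup M] [Module R M] :
    Ideal R :=
  ⨆ (n : ℕ) (f : (Fin n → R) →ₗ[R] M) (_ : Function.Surjective f),
    Ideal.span { d : R | ∃ P : Matrix (Fin n) (Fin n) R,
      (∀ i, P i ∈ LinearMap.ker f) ∧ d = P.det }

namespace S19

variable (n : ℕ) (A : Type*) [CommRing A]

/-- The generating set of the ideal of relations. -/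
def genSet : Set (MvPolynomial (Fin n) A) :=
  { p | ∃ i j : Fin n, i < j ∧ p = X i ^ 2 - X j ^ 2 } ∪
    { p | ∃ i j : Fin n, i < j ∧ p = X i * X j }

/-- The ideal of relations. -/
noncomputable abbrev Irel : Ideal (MvPolynomial (Fin n) A) := Ideal.span (genSet n A)

/-- The quotient ring `B`. -/
abbrev Bq := MvPolynomial (Fin n) A ⧸ Irel n A

/-- The class of `X i` in `B`. -/
noncomputable def xc {n : ℕ} (A : Type*) [CommRing A] (i : Fin n) : Bq n A :=
  Ideal.Quotient.mk _ (X i)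

variable {n A}

lemma xmul {i j : Fin n} (h : i ≠ j) : xc A i * xc A j = 0 := by
  have key : ∀ i j : Fin n, i < j → xc A i * xc A j = 0 := by
    intro i j hij
    have : (X i * X j : MvPolynomial (Fin n) A) ∈ Irel n A :=
      Ideal.subset_span (Or.inr ⟨i, j, hij, rfl⟩)
    rw [xc, xc, ← map_mul, Ideal.Quotient.eq_zero_iff_mem]
    exact this
  rcases h.lt_or_gt with h' | h'
  · exact key _ _ h'
  · rw [mul_comm]; exact key _ _ h'

lemma xsq (i j : Fin n) : xc A i ^ 2 = xc A j ^ 2 := by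
  have key : ∀ i j : Fin n, i < j → xc A i ^ 2 = xc A j ^ 2 := by
    intro i j hij
    have : (X i ^ 2 - X j ^ 2 : MvPolynomial (Fin n) A) ∈ Irel n A :=
      Ideal.subset_span (Or.inl ⟨i, j, hij, rfl⟩)
    rw [xc, xc, ← map_pow, ← map_pow, Ideal.Quotient.eq]
    exact this
  rcases lt_trichotomy i j with h' | h' | h'
  · exact key _ _ h'
  · rw [h']
  · exact (key _ _ h').symm

lemma exists_third (hn : 3 ≤ n) (a c : Fin n) : ∃ l : Fin n, l ≠ a ∧ l ≠ c := by
  by_contra h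
  push_neg at h
  have hsub : (Finset.univ : Finset (Fin n)) ⊆ {a, c} := by
    intro l _
    rcases eq_or_ne l a with h1 | h1
    · simp [h1]
    · simp [h l h1]
  have := Finset.card_le_card hsub
  have h2 : ({a, c} : Finset (Fin n)).card ≤ 2 := by
    apply le_trans (Finset.card_insert_le _ _); simp
  simp [Finset.card_univ] at this
  omega

lemma xxx (hn : 3 ≤ n) (a b c : Fin n) : xc A a * xc A b * xc A c = 0 := by
  rcases eq_or_ne a b with rfl | hab
  · obtain ⟨l, hla, hlc⟩ := exists_third hn a c
    have h1 : xc A a * xc A a = xc A l * xc A l := by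
      have := xsq (A := A) a l; rwa [pow_two, pow_two] at this
    rw [h1, mul_assoc, xmul hlc, mul_zero]
  · rw [xmul hab, zero_mul]

variable (n A) in
/-- The maximal ideal `m = ⟨x_1, …, x_n⟩`. -/
noncomputable abbrev mIdeal : Ideal (Bq n A) := Ideal.span (Set.range (xc (n := n) A))

lemma triple_zero (hn : 3 ≤ n) :
    ∀ u ∈ mIdeal n A, ∀ v ∈ mIdeal n A, ∀ w ∈ mIdeal n A, u * v * w = 0 := by
  have base : ∀ (a b : Fin n), ∀ w ∈ mIdeal n A, xc A a * xc A b * w = 0 := by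
    intro a b w hw
    induction hw using Submodule.span_induction with
    | mem x hx => obtain ⟨c, rfl⟩ := hx; exact xxx hn a b c
    | zero => rw [mul_zero]
    | add x y _ _ hx hy => rw [mul_add, hx, hy, add_zero]
    | smul r x _ hx =>
        rw [smul_eq_mul, show xc A a * xc A b * (r * x) = r * (xc A a * xc A b * x) by ring,
          hx, mul_zero]
  have mid : ∀ (a : Fin n), ∀ v ∈ mIdeal n A, ∀ w ∈ mIdeal n A, xc A a * v * w = 0 := by
    intro a v hv
    induction hv using Submodule.span_induction with
    | mem x hx => obtain ⟨b, rfl⟩ := hx; exact base a b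
    | zero => intro w hw; rw [mul_zero, zero_mul]
    | add x y _ _ hx hy =>
        intro w hw
        rw [mul_add, add_mul, hx w hw, hy w hw, add_zero]
    | smul r x _ hx =>
        intro w hw
        rw [smul_eq_mul, show xc A a * (r * x) * w = r * (xc A a * x * w) by ring, hx w hw,
          mul_zero]
  intro u hu
  induction hu using Submodule.span_induction with
  | mem x hx => obtain ⟨a, rfl⟩ := hx; exact mid a
  | zero => intro v _ w _; rw [zero_mul, zero_mul]
  | add x y _ _ hx hy =>
      intro v hv w hw
      rw [add_mul, add_mul, hx v hv w hw, hy v hv w hw, add_zero]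
  | smul r x _ hx =>
      intro v hv w hw
      rw [smul_eq_mul, show r * x * v * w = r * (x * v * w) by ring, hx v hv w hw, mul_zero]

/-- Lift an assignment of the generators satisfying the relations to an algebra hom on `B`. -/
noncomputable def liftB {S : Type*} [CommRing S] [Algebra A S] (f : Fin n → S)
    (h1 : ∀ i j : Fin n, i ≠ j → f i * f j = 0)
    (h2 : ∀ i j : Fin n, f i ^ 2 = f j ^ 2) : Bq n A →ₐ[A] S :=
  Ideal.Quotient.liftₐ _ (aeval f) (by
    intro p hp
    have hle : Irel n A ≤ RingHom.ker (aeval f : MvPolynomial (Fin n) A →ₐ[A] S) := by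
      rw [Ideal.span_le]
      rintro q hq
      rcases hq with ⟨i, j, hij, rfl⟩ | ⟨i, j, hij, rfl⟩ <;>
        simp [RingHom.mem_ker, h2 i j, h1 i j hij.ne]
    exact hle hp)

@[simp] lemma liftB_xc {S : Type*} [CommRing S] [Algebra A S] (f : Fin n → S)
    (h1 : ∀ i j : Fin n, i ≠ j → f i * f j = 0)
    (h2 : ∀ i j : Fin n, f i ^ 2 = f j ^ 2) (i : Fin n) :
    liftB f h1 h2 (xc A i) = f i := by
  exact aeval_X f i

variable (n A) in
/-- The augmentation `B → A`. -/
noncomputable def epsAug : Bq n A →ₐ[A] A :=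
  liftB (fun _ => (0 : A)) (fun _ _ _ => by ring) (fun _ _ => rfl)

lemma epsAug_mk (p : MvPolynomial (Fin n) A) :
    epsAug n A (Ideal.Quotient.mk _ p) = constantCoeff p := by
  have : epsAug n A (Ideal.Quotient.mk _ p) = aeval (fun _ => (0 : A)) p := by
    rfl
  rw [this, show (fun _ => (0 : A)) = (0 : Fin n → A) from rfl, aeval_zero]
  simp

lemma mem_m_of_eps_zero {b : Bq n A} (hb : epsAug n A b = 0) : b ∈ mIdeal n A := by
  obtain ⟨p, rfl⟩ := Ideal.Quotient.mk_surjective b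
  have key : ∀ p : MvPolynomial (Fin n) A,
      Ideal.Quotient.mk (Irel n A) p - algebraMap A (Bq n A) (constantCoeff p) ∈ mIdeal n A := by
    intro p
    induction p using MvPolynomial.induction_on with
    | C a =>
        have : (Ideal.Quotient.mk (Irel n A)) (C a) = algebraMap A (Bq n A) a := by
          rw [← MvPolynomial.algebraMap_eq]
          exact (Ideal.Quotient.mkₐ A (Irel n A)).commutes a
        simp [this]
    | add p q hp hq =>
        have heq : Ideal.Quotient.mk (Irel n A) (p + q)
            - algebraMap A (Bq n A) (constantCoeff (p + q))
            = (Ideal.Quotient.mk (Irel n A) p - algebraMap A (Bq n A) (constantCoeff p))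
              + (Ideal.Quotient.mk (Irel n A) q - algebraMap A (Bq n A) (constantCoeff q)) := by
          rw [map_add, map_add, map_add]
          ring
        rw [heq]
        exact add_mem hp hq
    | mul_X p i hp =>
        have h0 : constantCoeff (p * X i) = 0 := by
          rw [map_mul, constantCoeff_X, mul_zero]
        rw [h0, map_zero, sub_zero, map_mul]
        exact Ideal.mul_mem_left _ _ (Ideal.subset_span ⟨i, rfl⟩)
  rw [epsAug_mk] at hb
  have := key p
  rwa [hb, map_zero, sub_zero] at this

section Derivations

/-- The coefficient-extraction property: if `∑ vᵢ • d xᵢ = 0` in `Ω[B⁄A]` then all `ε vᵢ = 0`. -/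
lemma eps_of_rel (j : Fin n) (v : Fin n → Bq n A)
    (h : ∑ i, v i • (KaehlerDifferential.D A (Bq n A)) (xc A i) = 0) :
    epsAug n A (v j) = 0 := by
  letI : Module (Bq n A) A := Module.compHom A (epsAug n A).toRingHom
  have hsmul : ∀ (b : Bq n A) (c : A), b • c = epsAug n A b * c := fun _ _ => rfl
  letI : IsScalarTower A (Bq n A) A := ⟨fun a b c => by
    rw [hsmul, hsmul, map_smul, smul_eq_mul, smul_eq_mul, mul_assoc]⟩
  -- The dual-number evaluation detecting the `j`-th coordinate.
  set f : Fin n → DualNumber A := fun i => if i = j then DualNumber.eps else 0 with hf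
  have h1 : ∀ i i' : Fin n, i ≠ i' → f i * f i' = 0 := by
    intro i i' hne
    simp only [hf]
    split_ifs with hi hi'
    · exact absurd (hi.trans hi'.symm) hne
    all_goals simp
  have h2 : ∀ i i' : Fin n, f i ^ 2 = f i' ^ 2 := by
    intro i i'
    simp only [hf]
    split_ifs <;> simp [sq, DualNumber.eps_mul_eps]
  set Ψ : Bq n A →ₐ[A] DualNumber A := liftB f h1 h2 with hΨ
  have hfst : ∀ b : Bq n A, (Ψ b).fst = epsAug n A b := by
    have : (TrivSqZeroExt.fstHom A A A).comp Ψ = epsAug n A := by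
      apply Ideal.Quotient.algHom_ext
      apply MvPolynomial.algHom_ext
      intro i
      show (Ψ (xc A i)).fst = epsAug n A (xc A i)
      rw [hΨ, liftB_xc, show epsAug n A (xc A i) = _ from liftB_xc _ _ _ i]
      simp only [hf]
      split_ifs <;> simp
    intro b
    exact DFunLike.congr_fun this b
  -- the derivation `B → A`
  set D : Derivation A (Bq n A) A :=
    { toFun := fun b => (Ψ b).snd
      map_add' := fun a b => by
        show (Ψ (a + b)).snd = (Ψ a).snd + (Ψ b).snd
        rw [map_add, TrivSqZeroExt.snd_add]
      map_smul' := fun a b => by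
        show (Ψ (a • b)).snd = a • (Ψ b).snd
        rw [map_smul, TrivSqZeroExt.snd_smul]
      map_one_eq_zero' := by
        show (Ψ 1).snd = 0
        rw [map_one, TrivSqZeroExt.snd_one]
      leibniz' := fun a b => by
        show (Ψ (a * b)).snd = a • (Ψ b).snd + b • (Ψ a).snd
        rw [map_mul, TrivSqZeroExt.snd_mul, hsmul, hsmul, hfst, hfst,
          MulOpposite.smul_eq_mul_unop, MulOpposite.unop_op, smul_eq_mul]
        ring } with hD
  have hDx : ∀ i : Fin n, D (xc A i) = if i = j then (1 : A) else 0 := by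
    intro i
    show (Ψ (xc A i)).snd = _
    rw [hΨ, liftB_xc]
    simp only [hf]
    split_ifs <;> simp
  have := congrArg D.liftKaehlerDifferential h
  rw [map_sum, map_zero] at this
  have heval : ∀ i, D.liftKaehlerDifferential
      (v i • (KaehlerDifferential.D A (Bq n A)) (xc A i)) =
      epsAug n A (v i) * (if i = j then (1 : A) else 0) := by
    intro i
    rw [map_smul, Derivation.liftKaehlerDifferential_comp_D, hDx, hsmul]
  rw [Finset.sum_congr rfl (fun i _ => heval i)] at this
  simpa using this

end Derivations

lemma span_dx_top :
    Submodule.span (Bq n A)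
      (Set.range fun i => (KaehlerDifferential.D A (Bq n A)) (xc A i)) = ⊤ := by
  rw [eq_top_iff, ← KaehlerDifferential.span_range_derivation, Submodule.span_le]
  rintro _ ⟨b, rfl⟩
  obtain ⟨p, rfl⟩ := Ideal.Quotient.mk_surjective b
  induction p using MvPolynomial.induction_on with
  | C a =>
      have : (Ideal.Quotient.mk (Irel n A)) (C a) = algebraMap A (Bq n A) a := by
        rw [← MvPolynomial.algebraMap_eq]
        exact (Ideal.Quotient.mkₐ A (Irel n A)).commutes a
      rw [this, Derivation.map_algebraMap]
      exact zero_mem _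
  | add p q hp hq =>
      rw [map_add, map_add]
      exact add_mem hp hq
  | mul_X p i hp =>
      rw [map_mul, Derivation.leibniz]
      exact add_mem (Submodule.smul_mem _ _ (Submodule.subset_span ⟨i, rfl⟩))
        (Submodule.smul_mem _ _ hp)

set_option maxHeartbeats 1000000 in
/-- Main determinant-vanishing lemma. -/
lemma det_zero_of_rel (hn : 3 ≤ n) {a : ℕ}
    (f : (Fin a → Bq n A) →ₗ[Bq n A] Ω[(Bq n A)⁄A]) (hf : Function.Surjective f)
    (P : Matrix (Fin a) (Fin a) (Bq n A)) (hP : ∀ k, P k ∈ LinearMap.ker f) :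
    P.det = 0 := by
  classical
  set Dx : Fin n → Ω[(Bq n A)⁄A] := fun i => (KaehlerDifferential.D A (Bq n A)) (xc A i) with hDx
  -- preimages of the `Dx i`
  have hc : ∀ i : Fin n, ∃ w : Fin a → Bq n A, f w = Dx i := fun i => hf _
  choose c hcs using hc
  -- expansion of the `f (Pi.single k 1)` in terms of the `Dx i`
  have hG : ∀ k : Fin a, ∃ g : Fin n → Bq n A, ∑ i, g i • Dx i = f (Pi.single k 1) := by
    intro k
    have hmem : f (Pi.single k 1) ∈ Submodule.span (Bq n A) (Set.range Dx) := by
      rw [hDx, span_dx_top]; trivial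
    exact (Submodule.mem_span_range_iff_exists_fun (Bq n A)).1 hmem
  choose G hGs using hG
  have hfv : ∀ v : Fin a → Bq n A, f v = ∑ k, v k • f (Pi.single k 1) := by
    intro v
    have hv : v = ∑ k, v k • (Pi.single k (1 : Bq n A) : Fin a → Bq n A) := by
      funext j
      rw [Finset.sum_apply]
      simp [Pi.single_apply, mul_ite, Finset.sum_ite_eq, Finset.sum_ite_eq']
    conv_lhs => rw [hv]
    rw [map_sum]
    simp only [map_smul]
  set Q : Matrix (Fin n ⊕ Fin a) (Fin n ⊕ Fin a) (Bq n A) :=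
    Matrix.fromBlocks 1 (Matrix.of fun i k => -(c i k)) 0 P with hQ
  set E : Matrix (Fin n ⊕ Fin a) (Fin n ⊕ Fin a) (Bq n A) :=
    Matrix.fromBlocks 1 0 (Matrix.of fun k i => G k i) 1 with hE
  -- each row of `Q` is a relation
  have hrow : ∀ r, (∑ i, Q r (Sum.inl i) • Dx i) + f (fun k => Q r (Sum.inr k)) = 0 := by
    rintro (i | k)
    · have e1 : ∑ i', Q (Sum.inl i) (Sum.inl i') • Dx i' = Dx i := by
        have he : ∀ i', Q (Sum.inl i) (Sum.inl i') • Dx i'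
            = if i' = i then Dx i' else 0 := by
          intro i'
          rw [hQ, Matrix.fromBlocks_apply₁₁, Matrix.one_apply]
          by_cases h : i = i'
          · subst h; simp; exact one_smul (Bq n A) (Dx i)
          · simp [h, Ne.symm h]; exact zero_smul (Bq n A) (Dx i')
        rw [Finset.sum_congr rfl fun i' _ => he i']
        simp
      have e2 : f (fun k => Q (Sum.inl i) (Sum.inr k)) = -Dx i := by
        have he : (fun k => Q (Sum.inl i) (Sum.inr k)) = -(c i) := by
          funext k
          rw [hQ, Matrix.fromBlocks_apply₁₂]
          rfl
        rw [he, map_neg, hcs]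
      rw [e1, e2, add_neg_cancel]
    · have e1 : ∑ i', Q (Sum.inr k) (Sum.inl i') • Dx i' = 0 := by
        have he : ∀ i', Q (Sum.inr k) (Sum.inl i') = 0 := by
          intro i'
          rw [hQ, Matrix.fromBlocks_apply₂₁]
          rfl
        rw [Finset.sum_congr rfl fun i' _ => (by rw [he i']; exact zero_smul (Bq n A) (Dx i') :
          Q (Sum.inr k) (Sum.inl i') • Dx i' = 0)]
        simp
      have e2 : (fun k' => Q (Sum.inr k) (Sum.inr k')) = P k := by
        funext k'
        rw [hQ, Matrix.fromBlocks_apply₂₂]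
      rw [e1, e2, zero_add]
      exact hP k
  -- entries of columns `inl i` of `Q * E` lie in `m`
  have hcol : ∀ r i, (Q * E) r (Sum.inl i) ∈ mIdeal n A := by
    intro r i
    have hQE : (Q * E) r (Sum.inl i)
        = Q r (Sum.inl i) + ∑ k, Q r (Sum.inr k) * G k i := by
      rw [Matrix.mul_apply, Fintype.sum_sum_type]
      congr 1
      · have he : ∀ j, Q r (Sum.inl j) * E (Sum.inl j) (Sum.inl i)
            = if j = i then Q r (Sum.inl j) else 0 := by
          intro j
          rw [hE, Matrix.fromBlocks_apply₁₁, Matrix.one_apply]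
          by_cases h : j = i <;> simp [h]
        simp only [he]
        simp
    have h2 : ∀ k, Q r (Sum.inr k) • f (Pi.single k 1)
        = ∑ i', (Q r (Sum.inr k) * G k i') • Dx i' := by
      intro k
      rw [← hGs k]
      refine (Finset.smul_sum (r := Q r (Sum.inr k)) (s := Finset.univ)
        (f := fun i => G k i • Dx i)).trans ?_
      exact Finset.sum_congr rfl fun i' _ => (smul_smul (Q r (Sum.inr k)) (G k i') (Dx i'))
    have hrel : ∑ i', (Q r (Sum.inl i') + ∑ k, Q r (Sum.inr k) * G k i') • Dx i' = 0 := by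
      have h1 := hrow r
      rw [hfv (fun k => Q r (Sum.inr k))] at h1
      calc ∑ i', (Q r (Sum.inl i') + ∑ k, Q r (Sum.inr k) * G k i') • Dx i'
          = ∑ i', Q r (Sum.inl i') • Dx i'
            + ∑ i', ∑ k, (Q r (Sum.inr k) * G k i') • Dx i' := by
            rw [← Finset.sum_add_distrib]
            exact Finset.sum_congr rfl fun i' _ => by
              exact (add_smul (Q r (Sum.inl i')) (∑ k, Q r (Sum.inr k) * G k i') (Dx i')).trans
                (congrArg (HAdd.hAdd (Q r (Sum.inl i') • Dx i')) (Finset.sum_smul (x := Dx i')))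
        _ = ∑ i', Q r (Sum.inl i') • Dx i'
            + ∑ k, ∑ i', (Q r (Sum.inr k) * G k i') • Dx i' := by
            rw [Finset.sum_comm]
        _ = ∑ i', Q r (Sum.inl i') • Dx i'
            + ∑ k, Q r (Sum.inr k) • f (Pi.single k 1) := by
            rw [Finset.sum_congr rfl fun k _ => (h2 k).symm]
        _ = 0 := h1
    rw [hQE]
    exact mem_m_of_eps_zero (eps_of_rel i _ hrel)
  -- determinant bookkeeping
  have h1 : P.det = Q.det := by
    rw [hQ, Matrix.det_fromBlocks_zero₂₁, Matrix.det_one, one_mul]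
  have h2 : E.det = 1 := by
    rw [hE, Matrix.det_fromBlocks_zero₁₂, Matrix.det_one, Matrix.det_one, one_mul]
  have h3 : Q.det = (Q * E).det := by rw [Matrix.det_mul, h2, mul_one]
  rw [h1, h3, Matrix.det_apply]
  apply Finset.sum_eq_zero
  intro σ _
  obtain ⟨i0, i1, i2, h01, h02, h12⟩ :
      ∃ i0 i1 i2 : Fin n, i0 ≠ i1 ∧ i0 ≠ i2 ∧ i1 ≠ i2 :=
    ⟨⟨0, by omega⟩, ⟨1, by omega⟩, ⟨2, by omega⟩, by simp [Fin.ext_iff],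
      by simp [Fin.ext_iff], by simp [Fin.ext_iff]⟩
  have h12' : (Sum.inl i0 : Fin n ⊕ Fin a) ≠ Sum.inl i1 := by simp [h01]
  have h13' : (Sum.inl i0 : Fin n ⊕ Fin a) ≠ Sum.inl i2 := by simp [h02]
  have h23' : (Sum.inl i1 : Fin n ⊕ Fin a) ≠ Sum.inl i2 := by simp [h12]
  have hmem2 : (Sum.inl i1 : Fin n ⊕ Fin a) ∈ Finset.univ.erase (Sum.inl i0) :=
    Finset.mem_erase.mpr ⟨h12'.symm, Finset.mem_univ _⟩
  have hmem3 : (Sum.inl i2 : Fin n ⊕ Fin a)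
      ∈ (Finset.univ.erase (Sum.inl i0)).erase (Sum.inl i1) :=
    Finset.mem_erase.mpr ⟨h23'.symm, Finset.mem_erase.mpr ⟨h13'.symm, Finset.mem_univ _⟩⟩
  have key : (Q * E) (σ (Sum.inl i0)) (Sum.inl i0) * (Q * E) (σ (Sum.inl i1)) (Sum.inl i1)
      * (Q * E) (σ (Sum.inl i2)) (Sum.inl i2) = 0 :=
    triple_zero hn _ (hcol _ _) _ (hcol _ _) _ (hcol _ _)
  have habs : ∀ x y z w : Bq n A, x * y * z = 0 → x * (y * (z * w)) = 0 := by
    intro x y z w h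
    rw [show x * (y * (z * w)) = x * y * z * w by ring, h, zero_mul]
  have hzero : ∏ j, (Q * E) (σ j) j = 0 := by
    rw [← Finset.mul_prod_erase _ _ (Finset.mem_univ (Sum.inl i0 : Fin n ⊕ Fin a)),
      ← Finset.mul_prod_erase _ _ hmem2, ← Finset.mul_prod_erase _ _ hmem3]
    exact habs _ _ _ _ key
  rw [hzero, smul_zero]

/-- **Part 1**: the Kähler different vanishes. -/
lemma part1 (hn : 3 ≤ n) : fittingIdeal0 (Bq n A) (Ω[(Bq n A)⁄A]) = ⊥ := by
  unfold fittingIdeal0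
  simp only [iSup_eq_bot]
  intro a f hf
  rw [Ideal.span_eq_bot]
  rintro d ⟨P, hP, rfl⟩
  exact det_zero_of_rel hn f hf P hP


section Part2

set_option synthInstance.maxHeartbeats 1000000
set_option maxHeartbeats 1600000

variable {n : ℕ} {A : Type*} [CommRing A]

noncomputable local instance : CommRing (Bq n A ⊗[A] Bq n A) := inferInstance

noncomputable local instance : Algebra A (Bq n A ⊗[A] Bq n A) := inferInstance

noncomputable local instance : Module (Bq n A) (Bq n A ⊗[A] Bq n A) := inferInstance

/-- The Noether-different witness element `∑ xᵢ ⊗ xᵢ + x₀² ⊗ 1 + 1 ⊗ x₀²`. -/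
noncomputable def tEl (i0 : Fin n) : Bq n A ⊗[A] Bq n A :=
  (∑ i, xc A i ⊗ₜ[A] xc A i) + (xc A i0 ^ 2) ⊗ₜ[A] 1 + 1 ⊗ₜ[A] (xc A i0 ^ 2)

lemma tEl_mul_gen (hn : 3 ≤ n) (i0 k : Fin n) :
    tEl (A := A) i0 * ((1 : Bq n A) ⊗ₜ[A] xc A k - xc A k ⊗ₜ[A] 1) = 0 := by
  have hxsq : xc A k * xc A k = xc A i0 ^ 2 := by
    rw [← pow_two]; exact xsq k i0
  have htrip : xc A i0 ^ 2 * xc A k = 0 := by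
    rw [pow_two]; exact xxx hn i0 i0 k
  have hs1 : (∑ i, xc A i ⊗ₜ[A] xc A i) * ((1 : Bq n A) ⊗ₜ[A] xc A k)
      = xc A k ⊗ₜ[A] (xc A i0 ^ 2) := by
    rw [Finset.sum_mul, Finset.sum_eq_single k]
    · rw [Algebra.TensorProduct.tmul_mul_tmul, mul_one, hxsq]
    · intro i _ hik
      rw [Algebra.TensorProduct.tmul_mul_tmul, mul_one, xmul hik, tmul_zero]
    · intro h; exact absurd (Finset.mem_univ k) h
  have hs2 : (∑ i, xc A i ⊗ₜ[A] xc A i) * (xc A k ⊗ₜ[A] (1 : Bq n A))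
      = (xc A i0 ^ 2) ⊗ₜ[A] xc A k := by
    rw [Finset.sum_mul, Finset.sum_eq_single k]
    · rw [Algebra.TensorProduct.tmul_mul_tmul, mul_one, hxsq]
    · intro i _ hik
      rw [Algebra.TensorProduct.tmul_mul_tmul, mul_one, xmul hik, zero_tmul]
    · intro h; exact absurd (Finset.mem_univ k) h
  have e1 : tEl (A := A) i0 * ((1 : Bq n A) ⊗ₜ[A] xc A k)
      = xc A k ⊗ₜ[A] (xc A i0 ^ 2) + (xc A i0 ^ 2) ⊗ₜ[A] xc A k := by
    rw [tEl, add_mul, add_mul, hs1, Algebra.TensorProduct.tmul_mul_tmul,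
      Algebra.TensorProduct.tmul_mul_tmul]
    simp [htrip]
  have e2 : tEl (A := A) i0 * (xc A k ⊗ₜ[A] (1 : Bq n A))
      = (xc A i0 ^ 2) ⊗ₜ[A] xc A k + xc A k ⊗ₜ[A] (xc A i0 ^ 2) := by
    rw [tEl, add_mul, add_mul, hs2, Algebra.TensorProduct.tmul_mul_tmul,
      Algebra.TensorProduct.tmul_mul_tmul]
    simp [htrip, mul_comm]
  rw [mul_sub, e1, e2]
  ring

lemma tEl_mul (hn : 3 ≤ n) (i0 : Fin n) (s : Bq n A) :
    tEl (A := A) i0 * ((1 : Bq n A) ⊗ₜ[A] s - s ⊗ₜ[A] (1 : Bq n A)) = 0 := by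
  obtain ⟨p, rfl⟩ := Ideal.Quotient.mk_surjective s
  induction p using MvPolynomial.induction_on with
  | C a =>
      have hC : (Ideal.Quotient.mk (Irel n A)) (C a) = algebraMap A (Bq n A) a := by
        rw [← MvPolynomial.algebraMap_eq]
        exact (Ideal.Quotient.mkₐ A (Irel n A)).commutes a
      rw [hC, Algebra.algebraMap_eq_smul_one, tmul_smul, ← smul_tmul', sub_self, mul_zero]
  | add p q hp hq =>
      rw [map_add]
      have hre : (1 : Bq n A) ⊗ₜ[A] (Ideal.Quotient.mk (Irel n A) p
            + Ideal.Quotient.mk (Irel n A) q)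
          - (Ideal.Quotient.mk (Irel n A) p + Ideal.Quotient.mk (Irel n A) q) ⊗ₜ[A] 1
          = ((1 : Bq n A) ⊗ₜ[A] Ideal.Quotient.mk (Irel n A) p
              - Ideal.Quotient.mk (Irel n A) p ⊗ₜ[A] 1)
            + ((1 : Bq n A) ⊗ₜ[A] Ideal.Quotient.mk (Irel n A) q
              - Ideal.Quotient.mk (Irel n A) q ⊗ₜ[A] 1) := by
        rw [tmul_add, add_tmul]
        ring
      rw [hre, mul_add, hp, hq, add_zero]
  | mul_X p i hp =>
      rw [map_mul]
      set b := Ideal.Quotient.mk (Irel n A) p with hb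
      set xi := Ideal.Quotient.mk (Irel n A) (X i : MvPolynomial (Fin n) A) with hxi
      have hxi' : xi = xc A i := rfl
      have hre : (1 : Bq n A) ⊗ₜ[A] (b * xi) - (b * xi) ⊗ₜ[A] 1
          = ((1 : Bq n A) ⊗ₜ[A] b) * ((1 : Bq n A) ⊗ₜ[A] xi - xi ⊗ₜ[A] 1)
            + (xi ⊗ₜ[A] (1 : Bq n A)) * ((1 : Bq n A) ⊗ₜ[A] b - b ⊗ₜ[A] 1) := by
        rw [mul_sub, mul_sub]
        simp only [Algebra.TensorProduct.tmul_mul_tmul, one_mul, mul_one]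
        rw [mul_comm xi b]
        abel
      rw [hre, mul_add,
        show tEl (A := A) i0 * (((1 : Bq n A) ⊗ₜ[A] b)
            * ((1 : Bq n A) ⊗ₜ[A] xi - xi ⊗ₜ[A] 1))
          = ((1 : Bq n A) ⊗ₜ[A] b)
            * (tEl (A := A) i0 * ((1 : Bq n A) ⊗ₜ[A] xi - xi ⊗ₜ[A] 1)) from by ring,
        show tEl (A := A) i0 * ((xi ⊗ₜ[A] (1 : Bq n A))
            * ((1 : Bq n A) ⊗ₜ[A] b - b ⊗ₜ[A] 1))
          = (xi ⊗ₜ[A] (1 : Bq n A))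
            * (tEl (A := A) i0 * ((1 : Bq n A) ⊗ₜ[A] b - b ⊗ₜ[A] 1)) from by ring,
        hxi', tEl_mul_gen hn i0 i, hp, mul_zero, mul_zero, add_zero]

lemma tEl_ann (hn : 3 ≤ n) (i0 : Fin n) :
    tEl (A := A) i0 ∈ (RingHom.ker (Algebra.TensorProduct.lmul' A :
      Bq n A ⊗[A] Bq n A →ₐ[A] Bq n A)).annihilator := by
  rw [Submodule.mem_annihilator]
  intro z hz
  rw [smul_eq_mul]
  have hz' : z ∈ Submodule.span (Bq n A)
      (Set.range fun s : Bq n A => (1 : Bq n A) ⊗ₜ[A] s - s ⊗ₜ[A] 1) := by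
    rw [KaehlerDifferential.submodule_span_range_eq_ideal]
    exact hz
  clear hz
  induction hz' using Submodule.span_induction with
  | mem x hx => obtain ⟨s, rfl⟩ := hx; exact tEl_mul hn i0 s
  | zero => rw [mul_zero]
  | add x y _ _ hx hy => rw [mul_add, hx, hy, add_zero]
  | smul b x _ hx => rw [mul_smul_comm, hx, smul_zero]

lemma lmul'_tEl (i0 : Fin n) :
    (Algebra.TensorProduct.lmul' A : Bq n A ⊗[A] Bq n A →ₐ[A] Bq n A) (tEl i0)
      = (n + 2) • (xc A i0 ^ 2) := by
  rw [tEl, map_add, map_add, map_sum]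
  simp only [Algebra.TensorProduct.lmul'_apply_tmul]
  have hsq : ∀ i : Fin n, xc A i * xc A i = xc A i0 ^ 2 := fun i => by
    rw [← pow_two]; exact xsq i i0
  rw [Finset.sum_congr rfl fun i _ => hsq i, Finset.sum_const, Finset.card_univ,
    Fintype.card_fin, mul_one, one_mul, add_nsmul, two_nsmul, ← add_assoc]

lemma coeff_facts {q : MvPolynomial (Fin n) A} (hq : q ∈ Irel n A) :
    constantCoeff q = 0 ∧ (∀ j, coeff (Finsupp.single j 1) q = 0) ∧
      ∑ i, coeff (Finsupp.single i 2) q = 0 := by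
  induction hq using Submodule.span_induction with
  | mem x hx =>
      rcases hx with ⟨i, j, hij, rfl⟩ | ⟨i, j, hij, rfl⟩
      · refine ⟨by simp, ?_, ?_⟩
        · intro j0
          rw [coeff_sub, X_pow_eq_monomial, X_pow_eq_monomial, coeff_monomial,
            coeff_monomial, if_neg (by simp [Finsupp.single_eq_single_iff]),
            if_neg (by simp [Finsupp.single_eq_single_iff]), sub_zero]
        · simp [X_pow_eq_monomial, coeff_sub, coeff_monomial,
            Finsupp.single_eq_single_iff, Finset.sum_sub_distrib]
      · have hXX : (X i * X j : MvPolynomial (Fin n) A)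
            = monomial (Finsupp.single i 1 + Finsupp.single j 1) 1 := by
          rw [← pow_one (X i : MvPolynomial (Fin n) A),
            ← pow_one (X j : MvPolynomial (Fin n) A), X_pow_eq_monomial,
            X_pow_eq_monomial, monomial_mul, one_mul]
        refine ⟨by simp, ?_, ?_⟩
        · intro j0
          rw [hXX, coeff_monomial, if_neg]
          intro h
          have hi := DFunLike.congr_fun h i
          have hj := DFunLike.congr_fun h j
          simp only [Finsupp.add_apply, Finsupp.single_apply, Finsupp.coe_add, Pi.add_apply]
            at hi hj
          rw [if_pos trivial, if_neg hij.ne'] at hi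
          rw [if_neg hij.ne, if_pos trivial] at hj
          split_ifs at hi hj with h1 h2
          · exact absurd (h1.symm.trans h2) hij.ne
          all_goals omega
        · rw [hXX]
          apply Finset.sum_eq_zero
          intro k _
          rw [coeff_monomial, if_neg]
          intro h
          have hi := DFunLike.congr_fun h i
          simp only [Finsupp.add_apply, Finsupp.single_apply, Finsupp.coe_add, Pi.add_apply]
            at hi
          rw [if_pos trivial, if_neg hij.ne'] at hi
          split_ifs at hi <;> omega
  | zero => simp
  | add x y _ _ hx hy =>
      obtain ⟨hx0, hx1, hx2⟩ := hx
      obtain ⟨hy0, hy1, hy2⟩ := hy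
      refine ⟨by rw [map_add, hx0, hy0, add_zero], fun j => ?_, ?_⟩
      · rw [coeff_add, hx1 j, hy1 j, add_zero]
      · simp only [coeff_add, Finset.sum_add_distrib, hx2, hy2, add_zero]
  | smul r x hmem hx =>
      obtain ⟨h0, h1, h2⟩ := hx
      rw [smul_eq_mul]
      have hcc : ∀ y : MvPolynomial (Fin n) A, coeff (0 : Fin n →₀ ℕ) y = constantCoeff y :=
        fun y => rfl
      refine ⟨by rw [map_mul, h0, mul_zero], fun j => ?_, ?_⟩
      · rw [coeff_mul]
        apply Finset.sum_eq_zero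
        rintro ⟨u, v⟩ huv
        rw [Finset.HasAntidiagonal.mem_antidiagonal] at huv
        have hv : v = Finsupp.single j (v j) := by
          ext k
          by_cases hk : k = j
          · subst hk; simp
          · have hval : u k + v k = (Finsupp.single j 1) k := by rw [← huv]; rfl
            rw [Finsupp.single_eq_of_ne hk] at hval
            rw [Finsupp.single_eq_of_ne hk]
            omega
        have hvj : v j ≤ 1 := by
          have hval : u j + v j = (Finsupp.single j 1) j := by rw [← huv]; rfl
          rw [Finsupp.single_eq_same] at hval
          omega
        rcases Nat.le_one_iff_eq_zero_or_eq_one.mp hvj with hh | hh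
        · rw [hv, hh, Finsupp.single_zero, hcc, h0, mul_zero]
        · rw [hv, hh, h1 j, mul_zero]
      · have hterm : ∀ i : Fin n, coeff (Finsupp.single i 2) (r * x)
            = constantCoeff r * coeff (Finsupp.single i 2) x := by
          intro i
          rw [coeff_mul, Finset.sum_eq_single ((0 : Fin n →₀ ℕ), Finsupp.single i 2)]
          · rw [hcc]
          · rintro ⟨u, v⟩ huv hne
            rw [Finset.HasAntidiagonal.mem_antidiagonal] at huv
            have hv : v = Finsupp.single i (v i) := by
              ext k
              by_cases hk : k = i
              · subst hk; simp
              · have hval : u k + v k = (Finsupp.single i 2) k := by rw [← huv]; rfl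
                rw [Finsupp.single_eq_of_ne hk] at hval
                rw [Finsupp.single_eq_of_ne hk]
                omega
            have hvi : v i ≤ 2 := by
              have hval : u i + v i = (Finsupp.single i 2) i := by rw [← huv]; rfl
              rw [Finsupp.single_eq_same] at hval
              omega
            rcases (by omega : v i = 0 ∨ v i = 1 ∨ v i = 2) with hh | hh | hh
            · rw [hv, hh, Finsupp.single_zero, hcc, h0, mul_zero]
            · rw [hv, hh, h1 i, mul_zero]
            · exfalso
              apply hne
              have hveq : v = Finsupp.single i 2 := by rw [hv, hh]
              have hu : u = 0 := by
                ext k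
                have hval : u k + v k = (Finsupp.single i 2) k := by rw [← huv]; rfl
                rw [hveq] at hval
                simp only [Finsupp.coe_zero, Pi.zero_apply]
                omega
              rw [hu, hveq]
          · intro hmm
            exact absurd (Finset.HasAntidiagonal.mem_antidiagonal.mpr (zero_add _)) hmm
        rw [Finset.sum_congr rfl fun i _ => hterm i, ← Finset.mul_sum, h2, mul_zero]

lemma x1sq_ne {K : Type*} [Field K] (hchar : ¬ ((ringChar K : ℕ) ∣ n + 2))
    (i0 : Fin n) : (n + 2) • (xc K i0 ^ 2) ≠ 0 := by
  intro h0
  have hmem : ((n + 2) • (X i0 ^ 2) : MvPolynomial (Fin n) K) ∈ Irel n K := by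
    rw [← Ideal.Quotient.eq_zero_iff_mem, map_nsmul, map_pow]
    exact h0
  have hsum := (coeff_facts hmem).2.2
  have hval : ∀ i : Fin n, coeff (Finsupp.single i 2) ((n + 2) • (X i0 ^ 2)
        : MvPolynomial (Fin n) K)
      = (n + 2) • coeff (Finsupp.single i 2) ((X i0 ^ 2 : MvPolynomial (Fin n) K)) :=
    fun i => coeff_smul _ _ _
  rw [Finset.sum_congr rfl fun i _ => hval i, ← Finset.smul_sum] at hsum
  have hone : ∑ i : Fin n, coeff (Finsupp.single i 2)
      ((X i0 ^ 2 : MvPolynomial (Fin n) K)) = 1 := by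
    simp [X_pow_eq_monomial, coeff_monomial, Finsupp.single_eq_single_iff]
  rw [hone, nsmul_eq_mul, mul_one] at hsum
  exact hchar ((ringChar.spec K (n + 2)).mp (by exact_mod_cast hsum))

end Part2

end S19

open S19 in
theorem kaehler_different_eq_bot_and_strict_inclusion
    (n : ℕ) (hn : 3 ≤ n) :
    (∀ (A : Type*) [CommRing A],
      letI I : Ideal (MvPolynomial (Fin n) A) := Ideal.span
        ({ p | ∃ i j : Fin n, i < j ∧ p = X i ^ 2 - X j ^ 2 } ∪
          { p | ∃ i j : Fin n, i < j ∧ p = X i * X j })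
      fittingIdeal0 (MvPolynomial (Fin n) A ⧸ I)
        (Ω[(MvPolynomial (Fin n) A ⧸ I)⁄A]) = ⊥) ∧
    ∀ (K : Type*) [Field K], ¬ ((ringChar K : ℕ) ∣ n + 2) →
      letI I : Ideal (MvPolynomial (Fin n) K) := Ideal.span
        ({ p | ∃ i j : Fin n, i < j ∧ p = X i ^ 2 - X j ^ 2 } ∪
          { p | ∃ i j : Fin n, i < j ∧ p = X i * X j })
      letI B := MvPolynomial (Fin n) K ⧸ I
      let x₁ : B := Ideal.Quotient.mk I (X ⟨0, by omega⟩)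
      (n + 2) • x₁ ^ 2 ≠ 0 ∧
        (n + 2) • x₁ ^ 2 ∈ Ideal.map (Algebra.TensorProduct.lmul' K : B ⊗[K] B →ₐ[K] B)
          (RingHom.ker (Algebra.TensorProduct.lmul' K : B ⊗[K] B →ₐ[K] B)).annihilator ∧
        fittingIdeal0 B (Ω[B⁄K])
          < Ideal.map (Algebra.TensorProduct.lmul' K : B ⊗[K] B →ₐ[K] B)
              (RingHom.ker (Algebra.TensorProduct.lmul' K : B ⊗[K] B →ₐ[K] B)).annihilator := by
  constructor
  · intro A _
    exact part1 hn
  · intro K _ hchar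
    have hne := x1sq_ne (n := n) hchar ⟨0, by omega⟩
    have hmem := Ideal.mem_map_of_mem
      (Algebra.TensorProduct.lmul' K : Bq n K ⊗[K] Bq n K →ₐ[K] Bq n K)
      (tEl_ann (A := K) hn ⟨0, by omega⟩)
    rw [lmul'_tEl] at hmem
    refine ⟨hne, hmem, ?_⟩
    have hbot : fittingIdeal0 (Bq n K) (Ω[(Bq n K)⁄K]) = ⊥ := part1 hn
    have hlt : (⊥ : Ideal (Bq n K)) < Ideal.map
        (Algebra.TensorProduct.lmul' K : Bq n K ⊗[K] Bq n K →ₐ[K] Bq n K)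
        (RingHom.ker (Algebra.TensorProduct.lmul' K :
          Bq n K ⊗[K] Bq n K →ₐ[K] Bq n K)).annihilator := by
      rw [bot_lt_iff_ne_bot]
      intro hb
      rw [hb] at hmem
      exact hne ((Submodule.mem_bot _).mp hmem)
    exact hbot ▸ hlt
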